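/- For even n, the cosine matrix of type II factorizes as C_n^II = P_n^T · diag(C_{n/2}^II, C_{n/2}^IV) · T_n, where P_n is the even-odd permutation matrix and T_n = (1/√2) [[I_{n/2}, J_{n/2}], [I_{n/2}, -J_{n/2}]]. -/

import Mathlib

open Matrix

/-- The cosine matrix of type II of size `n`. -/
noncomputable def CII (n : ℕ) : Matrix (Fin n) (Fin n) ℝ :=
  Matrix.of fun k l : Fin n =>
    Real.sqrt (2 / (n : ℝ)) * (if (k : ℕ) % n = 0 then 1 / Real.sqrt 2 else 1) *
      Real.cos ((k : ℕ) * (2 * (l : ℕ) + 1) * Real.pi / (2 * (n : ℝ)))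

/-- The cosine matrix of type IV of size `n`. -/
noncomputable def CIV (n : ℕ) : Matrix (Fin n) (Fin n) ℝ :=
  Matrix.of fun k l : Fin n =>
    Real.sqrt (2 / (n : ℝ)) *
      Real.cos ((2 * (k : ℕ) + 1) * (2 * (l : ℕ) + 1) * Real.pi / (4 * (n : ℝ)))

/-- The even-odd permutation matrix `P_n` for `n = 2c`. -/
def Pmat (c : ℕ) : Matrix (Fin (2 * c)) (Fin (2 * c)) ℝ :=
  Matrix.of fun k l : Fin (2 * c) =>
    if (k : ℕ) < c then (if (l : ℕ) = 2 * (k : ℕ) then 1 else 0)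
    else (if (l : ℕ) = 2 * ((k : ℕ) - c) + 1 then 1 else 0)

/-- Block diagonal matrix `diag(A, B)` of size `2c`. -/
noncomputable def blockDiag (c : ℕ) (A B : Matrix (Fin c) (Fin c) ℝ) :
    Matrix (Fin (2 * c)) (Fin (2 * c)) ℝ :=
  Matrix.of fun k l : Fin (2 * c) =>
    if hk : (k : ℕ) < c then
      if hl : (l : ℕ) < c then A ⟨(k : ℕ), hk⟩ ⟨(l : ℕ), hl⟩ else 0
    else
      if hl : (l : ℕ) < c then 0
      else B ⟨(k : ℕ) - c, by have := k.isLt; omega⟩ ⟨(l : ℕ) - c, by have := l.isLt; omega⟩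

/-- The matrix `T_n = (1/√2) [[I, J], [I, -J]]` for `n = 2c`. -/
noncomputable def Tmat (c : ℕ) : Matrix (Fin (2 * c)) (Fin (2 * c)) ℝ :=
  Matrix.of fun k l : Fin (2 * c) =>
    (1 / Real.sqrt 2) *
      (if (k : ℕ) < c then
        (if (l : ℕ) < c then (if (k : ℕ) = (l : ℕ) then 1 else 0)
         else (if (k : ℕ) + (l : ℕ) = 2 * c - 1 then 1 else 0))
       else
        (if (l : ℕ) < c then (if (k : ℕ) = (l : ℕ) + c then 1 else 0)
         else (if (k : ℕ) + (l : ℕ) = 3 * c - 1 then -1 else 0)))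

lemma PD_apply (c : ℕ) (A B : Matrix (Fin c) (Fin c) ℝ) (k : Fin (2*c)) (i0 : Fin (2*c))
    (h : ∀ i : Fin (2*c), Pmat c i k = if i = i0 then 1 else 0) (j : Fin (2*c)) :
    ((Pmat c)ᵀ * blockDiag c A B) k j = blockDiag c A B i0 j := by
  rw [Matrix.mul_apply, Finset.sum_eq_single i0]
  · rw [Matrix.transpose_apply, h, if_pos rfl, one_mul]
  · intro i _ hne
    rw [Matrix.transpose_apply, h, if_neg hne, zero_mul]
  · intro h'; exact absurd (Finset.mem_univ _) h'

theorem CII_factorization (c : ℕ) (hc : 0 < c) :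
    CII (2 * c) = (Pmat c)ᵀ * blockDiag c (CII c) (CIV c) * Tmat c := by
  have hc' : (c:ℝ) ≠ 0 := Nat.cast_ne_zero.mpr hc.ne'
  have hsqrt : Real.sqrt (2/((2*c:ℕ):ℝ)) = Real.sqrt (2/(c:ℝ)) * (1/Real.sqrt 2) := by
    have h2 : ((2*c:ℕ):ℝ) = 2*(c:ℝ) := by push_cast; ring
    rw [h2, show (2:ℝ)/(2*(c:ℝ)) = (2/(c:ℝ))/2 by field_simp,
      Real.sqrt_div (by positivity) 2, div_eq_mul_one_div]
  ext k l
  have hk2 := k.isLt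
  have hl2 := l.isLt
  rw [Matrix.mul_apply]
  by_cases hke : (k:ℕ) % 2 = 0
  · -- k even, k = 2a
    have hac : (k:ℕ)/2 < c := by omega
    set a := (k:ℕ)/2 with ha
    have hka : (k:ℕ) = 2*a := by omega
    have hP : ∀ i : Fin (2*c), Pmat c i k = if i = (⟨a, by omega⟩ : Fin (2*c)) then 1 else 0 := by
      intro i
      simp only [Pmat, Matrix.of_apply, Fin.ext_iff, Fin.val_mk]
      split_ifs <;> first | rfl | omega
    simp only [PD_apply c (CII c) (CIV c) k ⟨a, by omega⟩ hP]
    by_cases hlc : (l:ℕ) < c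
    · rw [Finset.sum_eq_single (⟨(l:ℕ), by omega⟩ : Fin (2*c))]
      · -- value: k even, l < c
              simp only [CII, _root_.blockDiag, Tmat, Matrix.of_apply, Fin.val_mk]
              rw [dif_pos hac, dif_pos hlc, if_pos hlc, if_pos hlc, if_pos trivial]
              have hmod : ((k:ℕ) % (2*c) = 0) ↔ (a % c = 0) := by
                rw [Nat.mod_eq_of_lt hk2, Nat.mod_eq_of_lt hac]; omega
              have hcos : Real.cos ((k:ℕ) * (2 * (l:ℕ) + 1) * Real.pi / (2 * ((2*c : ℕ) : ℝ)))
                  = Real.cos ((a:ℝ) * (2 * (l:ℕ) + 1) * Real.pi / (2 * (c:ℝ))) := by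
                congr 1
                push_cast [hka]
                field_simp
              rw [hsqrt, hcos]
              simp only [hmod]
              ring
      · intro j _ hne
        have hne' : (j:ℕ) ≠ (l:ℕ) := fun h => hne (Fin.ext (by simpa using h))
        by_cases hjc : (j:ℕ) < c
        · have hT : Tmat c j l = 0 := by
            simp only [Tmat, Matrix.of_apply, if_pos hjc, if_pos hlc, if_neg hne']
            ring
          rw [hT, mul_zero]
        · have hD : blockDiag c (CII c) (CIV c) ⟨a, by omega⟩ j = 0 := by
            simp only [_root_.blockDiag, Matrix.of_apply, Fin.val_mk]
            rw [dif_pos hac, dif_neg hjc]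
          rw [hD, zero_mul]
      · intro h'; exact absurd (Finset.mem_univ _) h'
    · rw [Finset.sum_eq_single (⟨2*c-1-(l:ℕ), by omega⟩ : Fin (2*c))]
      · -- value: k even, l >= c
              have hjc : 2*c-1-(l:ℕ) < c := by omega
              simp only [CII, _root_.blockDiag, Tmat, Matrix.of_apply, Fin.val_mk]
              rw [dif_pos hac, dif_pos hjc, if_pos hjc, if_neg hlc, if_pos (by omega : 2*c-1-(l:ℕ) + (l:ℕ) = 2*c-1)]
              have hmod : ((k:ℕ) % (2*c) = 0) ↔ (a % c = 0) := by
                rw [Nat.mod_eq_of_lt hk2, Nat.mod_eq_of_lt hac]; omega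
              have hsub : ((2*c-1-(l:ℕ) : ℕ) : ℝ) = 2*(c:ℝ) - 1 - (l:ℕ) := by
                rw [Nat.cast_sub (by omega), Nat.cast_sub (by omega)]
                push_cast; ring
              have hcos : Real.cos ((k:ℕ) * (2 * (l:ℕ) + 1) * Real.pi / (2 * ((2*c : ℕ) : ℝ)))
                  = Real.cos ((a:ℝ) * (2 * ((2*c-1-(l:ℕ) : ℕ) : ℝ) + 1) * Real.pi / (2 * (c:ℝ))) := by
                rw [show (a:ℝ) * (2 * ((2*c-1-(l:ℕ) : ℕ) : ℝ) + 1) * Real.pi / (2 * (c:ℝ))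
                    = ((a:ℤ):ℝ) * (2 * Real.pi) - (k:ℕ) * (2 * (l:ℕ) + 1) * Real.pi / (2 * ((2*c : ℕ) : ℝ)) from by
                  rw [hsub]; push_cast [hka]; field_simp; ring]
                rw [Real.cos_int_mul_two_pi_sub]
              rw [hsqrt, hcos]
              simp only [hmod]
              ring
      · intro j _ hne
        have hne' : (j:ℕ) ≠ 2*c-1-(l:ℕ) := fun h => hne (Fin.ext (by simpa using h))
        by_cases hjc : (j:ℕ) < c
        · have hT : Tmat c j l = 0 := by
            simp only [Tmat, Matrix.of_apply, if_pos hjc, if_neg hlc]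
            rw [if_neg (by omega)]; ring
          rw [hT, mul_zero]
        · have hD : blockDiag c (CII c) (CIV c) ⟨a, by omega⟩ j = 0 := by
            simp only [_root_.blockDiag, Matrix.of_apply, Fin.val_mk]
            rw [dif_pos hac, dif_neg hjc]
          rw [hD, zero_mul]
      · intro h'; exact absurd (Finset.mem_univ _) h'
  · -- k odd, k = 2b+1
    have hbc : (k:ℕ)/2 < c := by omega
    set b := (k:ℕ)/2 with hb
    have hkb : (k:ℕ) = 2*b+1 := by omega
    have hP : ∀ i : Fin (2*c), Pmat c i k = if i = (⟨b+c, by omega⟩ : Fin (2*c)) then 1 else 0 := by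
      intro i
      simp only [Pmat, Matrix.of_apply, Fin.ext_iff, Fin.val_mk]
      split_ifs <;> first | rfl | omega
    simp only [PD_apply c (CII c) (CIV c) k ⟨b+c, by omega⟩ hP]
    by_cases hlc : (l:ℕ) < c
    · rw [Finset.sum_eq_single (⟨(l:ℕ)+c, by omega⟩ : Fin (2*c))]
      · -- value: k odd, l < c
              simp only [CII, CIV, _root_.blockDiag, Tmat, Matrix.of_apply, Fin.val_mk]
              rw [dif_neg (by omega : ¬ b+c < c), dif_neg (by omega : ¬ (l:ℕ)+c < c),
                if_neg (by omega : ¬ (l:ℕ)+c < c), if_pos hlc, if_pos trivial,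
                if_neg (show ¬ (k:ℕ) % (2*c) = 0 by rw [Nat.mod_eq_of_lt hk2]; omega)]
              simp only [Nat.add_sub_cancel]
              have hcos : Real.cos ((k:ℕ) * (2 * (l:ℕ) + 1) * Real.pi / (2 * ((2*c : ℕ) : ℝ)))
                  = Real.cos ((2 * (b:ℝ) + 1) * (2 * (l:ℕ) + 1) * Real.pi / (4 * (c:ℝ))) := by
                congr 1
                push_cast [hkb]
                field_simp
                ring
              rw [hsqrt, hcos]
              ring
      · intro j _ hne
        have hne' : (j:ℕ) ≠ (l:ℕ)+c := fun h => hne (Fin.ext (by simpa using h))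
        by_cases hjc : (j:ℕ) < c
        · have hD : blockDiag c (CII c) (CIV c) ⟨b+c, by omega⟩ j = 0 := by
            simp only [_root_.blockDiag, Matrix.of_apply, Fin.val_mk]
            rw [dif_neg (by omega), dif_pos hjc]
          rw [hD, zero_mul]
        · have hT : Tmat c j l = 0 := by
            simp only [Tmat, Matrix.of_apply, if_neg hjc, if_pos hlc, if_neg hne']
            ring
          rw [hT, mul_zero]
      · intro h'; exact absurd (Finset.mem_univ _) h'
    · rw [Finset.sum_eq_single (⟨3*c-1-(l:ℕ), by omega⟩ : Fin (2*c))]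
      · -- value: k odd, l >= c
              have hjc : ¬ 3*c-1-(l:ℕ) < c := by omega
              simp only [CII, CIV, _root_.blockDiag, Tmat, Matrix.of_apply, Fin.val_mk]
              rw [dif_neg (by omega : ¬ b+c < c), dif_neg hjc,
                if_neg hjc, if_neg hlc, if_pos (by omega : 3*c-1-(l:ℕ) + (l:ℕ) = 3*c-1),
                if_neg (show ¬ (k:ℕ) % (2*c) = 0 by rw [Nat.mod_eq_of_lt hk2]; omega)]
              simp only [Nat.add_sub_cancel, show b+c-c = b from by omega,
                show 3*c-1-(l:ℕ)-c = 2*c-1-(l:ℕ) from by omega]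
              have hsub : ((2*c-1-(l:ℕ) : ℕ) : ℝ) = 2*(c:ℝ) - 1 - (l:ℕ) := by
                rw [Nat.cast_sub (by omega), Nat.cast_sub (by omega)]
                push_cast; ring
              have hcos : Real.cos ((2 * (b:ℝ) + 1) * (2 * ((2*c-1-(l:ℕ) : ℕ) : ℝ) + 1) * Real.pi / (4 * (c:ℝ)))
                  = - Real.cos ((k:ℕ) * (2 * (l:ℕ) + 1) * Real.pi / (2 * ((2*c : ℕ) : ℝ))) := by
                rw [show (2 * (b:ℝ) + 1) * (2 * ((2*c-1-(l:ℕ) : ℕ) : ℝ) + 1) * Real.pi / (4 * (c:ℝ))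
                    = (Real.pi - (k:ℕ) * (2 * (l:ℕ) + 1) * Real.pi / (2 * ((2*c : ℕ) : ℝ))) + ((b:ℤ):ℝ) * (2 * Real.pi) from by
                  rw [hsub]; push_cast [hkb]; field_simp; ring]
                rw [Real.cos_add_int_mul_two_pi, Real.cos_pi_sub]
              rw [hsqrt, hcos]
              ring
      · intro j _ hne
        have hne' : (j:ℕ) ≠ 3*c-1-(l:ℕ) := fun h => hne (Fin.ext (by simpa using h))
        by_cases hjc : (j:ℕ) < c
        · have hD : blockDiag c (CII c) (CIV c) ⟨b+c, by omega⟩ j = 0 := by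
            simp only [_root_.blockDiag, Matrix.of_apply, Fin.val_mk]
            rw [dif_neg (by omega), dif_pos hjc]
          rw [hD, zero_mul]
        · have hT : Tmat c j l = 0 := by
            simp only [Tmat, Matrix.of_apply, if_neg hjc, if_neg hlc]
            rw [if_neg (by omega)]; ring
          rw [hT, mul_zero]
      · intro h'; exact absurd (Finset.mem_univ _) h'
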